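/- arXiv:1412.0253 — 2 statements merged into one kernel-verified Lean document; each statement's English description precedes it below -/
import Mathlib

section
/- For every β > 0 and γ > 0, the Maxwellian M_β is an equilibrium of the Boltzmann collision integral: for every v ∈ ℝ³ the integral defining C(M_β)(v) converges absolutely and C(M_β)(v) = 0. -/
open MeasureTheory Real

noncomputable section

abbrev R3 : Type := EuclideanSpace ℝ (Fin 3)

abbrev S2 : Type := Metric.sphere (0 : R3) 1

/-- Euclidean inner product on ℝ³. -/
noncomputable def dotp (x y : R3) : ℝ := inner ℝ x y

/-- The surface measure on the unit sphere `S² ⊂ ℝ³`. -/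
noncomputable def sphMeasure : Measure S2 := (volume : Measure R3).toSphere

/-- Lebesgue measure ⊗ surface measure on `ℝ³ × S²`. -/
noncomputable def prodMeas : Measure (R3 × S2) := (volume : Measure R3).prod sphMeasure

/-- The Maxwellian `M_β(v) = (β/(2π))^{3/2} exp(-β|v|²/2)`. -/
noncomputable def Mb (β : ℝ) (v : R3) : ℝ :=
  (β / (2 * π)) ^ ((3 : ℝ) / 2) * exp (-β * ‖v‖ ^ 2 / 2)

/-- Post-collision velocity `v' = v - ((v - v⋆)·n) n`. -/
noncomputable def vPost (v w : R3) (n : S2) : R3 := v - dotp (v - w) (n : R3) • (n : R3)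

/-- Post-collision velocity `v⋆' = v⋆ + ((v - v⋆)·n) n`. -/
noncomputable def wPost (v w : R3) (n : S2) : R3 := w + dotp (v - w) (n : R3) • (n : R3)

/-- The hard-sphere collision kernel `((v - v⋆)·n)₊`. -/
noncomputable def collKer (v w : R3) (n : S2) : ℝ := max (dotp (v - w) (n : R3)) 0

/-- The integrand of the Boltzmann collision integral `C(g)(v)`. -/
noncomputable def CbInt (g : R3 → ℝ) (v : R3) : R3 × S2 → ℝ :=
  fun p => (g (vPost v p.1 p.2) * g (wPost v p.1 p.2) - g v * g p.1) * collKer v p.1 p.2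

/-- The Boltzmann collision integral
`C(g)(v) = γ ∫ (g(v')g(v⋆') - g(v)g(v⋆)) ((v-v⋆)·n)₊ dv⋆ dn`. -/
noncomputable def Cb (γ : ℝ) (g : R3 → ℝ) (v : R3) : ℝ := γ * ∫ p, CbInt g v p ∂prodMeas


lemma maxwell_energy_cons (v w : R3) (n : S2) :
    ‖vPost v w n‖ ^ 2 + ‖wPost v w n‖ ^ 2 = ‖v‖ ^ 2 + ‖w‖ ^ 2 := by
  have hn : ‖(n : R3)‖ = 1 := by
    simpa using mem_sphere_zero_iff_norm.mp n.2
  set c : ℝ := dotp (v - w) (n : R3) with hc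
  have hcn : ‖c • (n : R3)‖ ^ 2 = c ^ 2 := by
    rw [norm_smul, mul_pow, hn]
    simp [sq_abs]
  have h1 : ‖vPost v w n‖ ^ 2 = ‖v‖ ^ 2 - 2 * (c * inner ℝ v (n : R3)) + c ^ 2 := by
    rw [vPost, ← hc, norm_sub_sq_real, real_inner_smul_right, hcn]
  have h2 : ‖wPost v w n‖ ^ 2 = ‖w‖ ^ 2 + 2 * (c * inner ℝ w (n : R3)) + c ^ 2 := by
    rw [wPost, ← hc, norm_add_sq_real, real_inner_smul_right, hcn]
  have hcval : c = inner ℝ v (n : R3) - inner ℝ w (n : R3) := by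
    rw [hc, dotp, inner_sub_left]
  rw [h1, h2, hcval]; ring

lemma maxwell_collision_invariant (β : ℝ) (v w : R3) (n : S2) :
    Mb β (vPost v w n) * Mb β (wPost v w n) = Mb β v * Mb β w := by
  have h := maxwell_energy_cons v w n
  unfold Mb
  rw [mul_mul_mul_comm, ← Real.exp_add, mul_mul_mul_comm, ← Real.exp_add]
  congr 1
  rw [Real.exp_eq_exp]
  linear_combination (-β / 2) * h

lemma cbint_maxwell_zero (β : ℝ) (v : R3) : CbInt (Mb β) v = fun _ => 0 := by
  funext p
  simp [CbInt, maxwell_collision_invariant β v p.1 p.2]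

/-- The Maxwellian is an equilibrium of the Boltzmann collision integral: for every `v` the
integral defining `C(M_β)(v)` converges absolutely and `C(M_β)(v) = 0`. -/
theorem maxwellian_collision_equilibrium (β γ : ℝ) (hβ : 0 < β) (hγ : 0 < γ) (v : R3) :
    Integrable (CbInt (Mb β) v) prodMeas ∧ Cb γ (Mb β) v = 0 := by
  constructor
  · rw [cbint_maxwell_zero]
    exact integrable_zero _ _ _
  · rw [Cb, cbint_maxwell_zero]
    simp
end
end

section
/- (Tensor powers of Boltzmann solutions solve the Boltzmann hierarchy.) Let γ > 0 and let f : [0,T] × ℝ³ × ℝ³ → ℝ be C¹ in (t,x), continuous, with 0 ≤ f(t,x,v) ≤ C e^{−α|v|²} for some C, α > 0, satisfying the Boltzmann equation ∂_t f + v·∇_x f = C(f) pointwise. Then for every k ≥ 1 the functions F_k(t, X_k, V_k) := ∏_{j=1}^k f(t, x_j, v_j) satisfy the k-th Boltzmann hierarchy equation pointwise: ∂_t F_k + Σ_{j=1}^k v_j·∇_{x_j} F_k = γ Σ_{j=1}^k C^{j,k+1}(F_{k+1}), where F_{k+1}(t, X_{k+1}, V_{k+1}) := ∏_{j=1}^{k+1}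 f(t, x_j, v_j). -/
open MeasureTheory Real

noncomputable section

/-- `T_{j,k+1}[n] V_{k+1}`: replaces `v_j` by `v_j - ((v_{k+1}-v_j)·n) n` and `v_{k+1}` by
`v_{k+1} - ((v_{k+1}-v_j)·n) n` in the `(k+1)`-tuple of velocities `W`. -/
noncomputable def collUpdate (k : ℕ) (j : Fin k) (n : S2) (W : Fin (k + 1) → R3) :
    Fin (k + 1) → R3 :=
  Function.update
    (Function.update W j.castSucc
      (W j.castSucc - dotp (W (Fin.last k) - W j.castSucc) (n : R3) • (n : R3)))
    (Fin.last k)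
    (W (Fin.last k) - dotp (W (Fin.last k) - W j.castSucc) (n : R3) • (n : R3))

/-- The integrand of the Boltzmann-hierarchy collision operator `C^{j,k+1}(F)(X_k, V_k)`;
the integration variable is `p = (v_{k+1}, n) ∈ ℝ³ × S²`. -/
noncomputable def ChierInt (k : ℕ) (j : Fin k)
    (F : (Fin (k + 1) → R3) → (Fin (k + 1) → R3) → ℝ)
    (X V : Fin k → R3) : R3 × S2 → ℝ :=
  fun p =>
    (F (Fin.snoc X (X j)) (collUpdate k j p.2 (Fin.snoc V p.1))
      - F (Fin.snoc X (X j)) (Fin.snoc V p.1)) * max (dotp (p.1 - V j) ((p.2 : R3))) 0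

/-- The Boltzmann-hierarchy collision operator `C^{j,k+1}`. -/
noncomputable def Chier (k : ℕ) (j : Fin k)
    (F : (Fin (k + 1) → R3) → (Fin (k + 1) → R3) → ℝ)
    (X V : Fin k → R3) : ℝ :=
  ∫ p, ChierInt k j F X V p ∂prodMeas

lemma norm_S2 (n : S2) : ‖(n : R3)‖ = 1 := by
  have := n.2
  rwa [mem_sphere_zero_iff_norm] at this

lemma dotp_self_S2 (n : S2) : dotp (n : R3) (n : R3) = 1 := by
  rw [dotp, real_inner_self_eq_norm_sq, norm_S2]; norm_num

lemma abs_dotp_le (x : R3) (n : S2) : |dotp x n| ≤ ‖x‖ := by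
  have := abs_real_inner_le_norm x (n : R3)
  rwa [norm_S2, mul_one] at this

-- energy identity for the Boltzmann map

lemma energy_id (v w : R3) (n : S2) :
    ‖v - dotp (v - w) n • (n : R3)‖ ^ 2 + ‖w + dotp (v - w) n • (n : R3)‖ ^ 2
      = ‖v‖ ^ 2 + ‖w‖ ^ 2 := by
  set c : ℝ := dotp (v - w) n with hc
  have h1 : ‖v - c • (n : R3)‖ ^ 2 = ‖v‖ ^ 2 - 2 * (c * inner ℝ v (n : R3)) + c ^ 2 := by
    rw [norm_sub_sq_real, real_inner_smul_right, norm_smul, norm_S2]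
    simp [mul_pow]; try ring
  have h2 : ‖w + c • (n : R3)‖ ^ 2 = ‖w‖ ^ 2 + 2 * (c * inner ℝ w (n : R3)) + c ^ 2 := by
    rw [norm_add_sq_real, real_inner_smul_right, norm_smul, norm_S2]
    simp [mul_pow]; try ring
  have h3 : c = inner ℝ v (n : R3) - inner ℝ w (n : R3) := by
    rw [hc, dotp, inner_sub_left]
  rw [h1, h2, h3]; ring

-- exponent identity for the hierarchy gain term

lemma energy_id' (v w : R3) (n : S2) :
    ‖v - dotp (w - v) n • (n : R3)‖ ^ 2 + ‖w - dotp (w - v) n • (n : R3)‖ ^ 2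
      = ‖v‖ ^ 2 + ‖w - (2 * dotp v n) • (n : R3)‖ ^ 2 := by
  set d : ℝ := dotp (w - v) n with hd
  have h1 : ‖v - d • (n : R3)‖ ^ 2 = ‖v‖ ^ 2 - 2 * (d * inner ℝ v (n : R3)) + d ^ 2 := by
    rw [norm_sub_sq_real, real_inner_smul_right, norm_smul, norm_S2]
    simp [mul_pow]; try ring
  have h2 : ‖w - d • (n : R3)‖ ^ 2 = ‖w‖ ^ 2 - 2 * (d * inner ℝ w (n : R3)) + d ^ 2 := by
    rw [norm_sub_sq_real, real_inner_smul_right, norm_smul, norm_S2]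
    simp [mul_pow]; try ring
  have h3 : ‖w - (2 * dotp v n) • (n : R3)‖ ^ 2
      = ‖w‖ ^ 2 - 2 * ((2 * dotp v n) * inner ℝ w (n : R3)) + (2 * dotp v n) ^ 2 := by
    rw [norm_sub_sq_real, real_inner_smul_right, norm_smul, norm_S2]
    simp [mul_pow]; try ring
  have h4 : d = inner ℝ w (n : R3) - inner ℝ v (n : R3) := by rw [hd, dotp, inner_sub_left]
  have h5 : dotp v n = (inner ℝ v (n : R3) : ℝ) := rfl
  rw [h1, h2, h3, h4, h5]; ring

noncomputable def reflLin (n : S2) : R3 →ₗ[ℝ] R3 where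
  toFun x := x - (2 * dotp x n) • (n : R3)
  map_add' x y := by
    simp only [dotp, inner_add_left]; module
  map_smul' c x := by
    simp only [dotp, real_inner_smul_left, RingHom.id_apply]; module

lemma reflLin_apply (n : S2) (x : R3) : reflLin n x = x - (2 * dotp x n) • (n : R3) := rfl

lemma reflLin_norm (n : S2) (x : R3) : ‖reflLin n x‖ = ‖x‖ := by
  have h : ‖reflLin n x‖ ^ 2 = ‖x‖ ^ 2 := by
    rw [reflLin_apply, norm_sub_sq_real, real_inner_smul_right, norm_smul, norm_S2]
    have : (inner ℝ x (n : R3) : ℝ) = dotp x n := rfl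
    simp [mul_pow, this]
    ring
  have h1 : ‖reflLin n x‖ = Real.sqrt (‖reflLin n x‖ ^ 2) := by
    rw [Real.sqrt_sq (norm_nonneg _)]
  rw [h1, h, Real.sqrt_sq (norm_nonneg _)]

lemma reflLin_invol (n : S2) : Function.Involutive (reflLin n) := by
  intro x
  simp only [reflLin_apply, dotp, inner_sub_left, real_inner_smul_left]
  have hnn : (inner ℝ (n : R3) (n : R3) : ℝ) = 1 := dotp_self_S2 n
  rw [hnn]
  module

/-- reflection as a linear isometry equivalence -/

noncomputable def reflIso (n : S2) : R3 ≃ₗᵢ[ℝ] R3 :=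
  { LinearEquiv.ofInvolutive (reflLin n) (reflLin_invol n) with
    norm_map' := reflLin_norm n }

lemma reflIso_apply (n : S2) (x : R3) : reflIso n x = x - (2 * dotp x n) • (n : R3) := rfl

/-- change of variables by the affine reflection `w ↦ w - 2((w-v)·n) n` -/

lemma integral_refl (v : R3) (n : S2) (g : R3 → ℝ) :
    ∫ w : R3, g (w - (2 * dotp (w - v) n) • (n : R3)) = ∫ w : R3, g w := by
  have mp1 : MeasurePreserving (fun w : R3 => w + (-v)) volume volume :=
    measurePreserving_add_right volume (-v)
  have mp2 : MeasurePreserving (reflIso n) volume volume :=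
    (reflIso n).measurePreserving
  have mp3 : MeasurePreserving (fun w : R3 => w + v) volume volume :=
    measurePreserving_add_right volume v
  have mp : MeasurePreserving (fun w : R3 => reflIso n (w + (-v)) + v) volume volume :=
    mp3.comp (mp2.comp mp1)
  have emb : MeasurableEmbedding (fun w : R3 => reflIso n (w + (-v)) + v) := by
    have e1 : MeasurableEmbedding (fun w : R3 => w + (-v)) :=
      (MeasurableEquiv.addRight (-v)).measurableEmbedding
    have e2 : MeasurableEmbedding (reflIso n) :=
      (reflIso n).toHomeomorph.measurableEmbedding
    have e3 : MeasurableEmbedding (fun w : R3 => w + v) :=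
      (MeasurableEquiv.addRight v).measurableEmbedding
    exact e3.comp (e2.comp e1)
  have key := mp.integral_comp emb g
  rw [← key]
  congr 1
  funext w
  congr 1
  rw [reflIso_apply]
  have : dotp (w + -v) n = dotp (w - v) n := by rw [sub_eq_add_neg]
  rw [this]
  abel

instance : IsFiniteMeasure sphMeasure := by unfold sphMeasure; infer_instance

noncomputable def antip (n : S2) : S2 :=
  ⟨-(n : R3), by
    have := n.2
    simp only [mem_sphere_zero_iff_norm] at this ⊢
    simpa using this⟩

lemma antip_coe (n : S2) : ((antip n : S2) : R3) = -(n : R3) := rfl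

lemma antip_invol : Function.Involutive antip := by
  intro n; ext; simp [antip_coe]

lemma continuous_antip : Continuous antip :=
  Continuous.subtype_mk (continuous_neg.comp continuous_subtype_val) _

lemma measurable_antip : Measurable antip := continuous_antip.measurable

lemma antip_measurePreserving : MeasurePreserving antip sphMeasure sphMeasure := by
  refine ⟨measurable_antip, ?_⟩
  refine Measure.ext fun s hs => ?_
  rw [Measure.map_apply measurable_antip hs]
  unfold sphMeasure
  rw [Measure.toSphere_apply' _ (measurable_antip hs), Measure.toSphere_apply' _ hs]
  congr 1
  have himg : Subtype.val '' (antip ⁻¹' s) = -(Subtype.val '' s) := by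
    ext x
    constructor
    · rintro ⟨n, hn, rfl⟩
      rw [Set.mem_neg]
      exact ⟨antip n, hn, by rw [antip_coe]⟩
    · intro hx
      rw [Set.mem_neg] at hx
      obtain ⟨m, hm, hmx⟩ := hx
      exact ⟨antip m, by simpa [antip_invol m] using hm, by rw [antip_coe, hmx, neg_neg]⟩
  rw [himg, Set.smul_neg, Measure.measure_neg]

lemma gauss_int {β : ℝ} (hβ : 0 < β) :
    Integrable (fun w : R3 => exp (-β * ‖w‖ ^ 2)) volume := by
  have hb : (0:ℝ) < (Complex.ofReal β).re := by simpa using hβ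
  have hc := GaussianFourier.integrable_cexp_neg_mul_sq_norm_add (V := R3) hb 0 0
  have := hc.norm
  refine this.congr (Filter.Eventually.of_forall fun w => ?_)
  simp only [Complex.norm_exp]
  rw [show (-(β:ℂ) * (‖w‖:ℂ) ^ 2 + 0 * ((inner ℝ (0:R3) w : ℝ) : ℂ)) = ((-β * ‖w‖^2 : ℝ) : ℂ) by
    push_cast; ring, Complex.ofReal_re]

lemma master_integrable {α : ℝ} (hα : 0 < α) (v : R3) :
    Integrable (fun w : R3 => (‖v‖ + ‖w‖) * exp (-α * max (‖w‖ - 2 * ‖v‖) 0 ^ 2)) volume := by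
  set K : ℝ := (max (‖v‖ + 1/2) (4/α)) * exp (α * (2*‖v‖)^2) with hK
  have hg := (gauss_int (show (0:ℝ) < α/4 by linarith)).const_mul K
  apply Integrable.mono' hg
  · apply Continuous.aestronglyMeasurable
    fun_prop
  · refine Filter.Eventually.of_forall fun w => ?_
    set x := ‖w‖ with hx
    have hx0 : 0 ≤ x := norm_nonneg _
    set a := ‖v‖ with ha
    have ha0 : 0 ≤ a := norm_nonneg _
    have hnn : 0 ≤ (a + x) * exp (-α * max (x - 2*a) 0 ^ 2) := by positivity
    rw [Real.norm_of_nonneg hnn]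
    have h1 : max (x - 2*a) 0 ^ 2 ≥ x^2/2 - (2*a)^2 := by
      rcases le_or_gt (2*a) x with h | h
      · rw [max_eq_left (by linarith)]; nlinarith [sq_nonneg (x - 4*a)]
      · rw [max_eq_right (by linarith)]; nlinarith
    have h2 : exp (-α * max (x - 2*a) 0 ^ 2) ≤ exp (α * (2*a)^2) * exp (-(α/2) * x^2) := by
      rw [← Real.exp_add, Real.exp_le_exp]; nlinarith
    have h3 : a + x ≤ max (a + 1/2) (4/α) * exp ((α/4) * x^2) := by
      have he : 1 + (α/4) * x^2 ≤ exp ((α/4) * x^2) := by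
        have := Real.add_one_le_exp ((α/4) * x^2); linarith
      have hm2 : 4/α ≤ max (a + 1/2) (4/α) := le_max_right _ _
      have hmp : 0 < max (a + 1/2) (4/α) := lt_of_lt_of_le (by positivity) hm2
      have hax : a + x ≤ (a + 1/2) + x^2/2 := by nlinarith [sq_nonneg (x - 1)]
      have h5 : 1 ≤ max (a + 1/2) (4/α) * (α/4) := by
        have h4 : (4/α) * (α/4) = 1 := by field_simp
        calc (1:ℝ) = (4/α) * (α/4) := h4.symm
          _ ≤ max (a + 1/2) (4/α) * (α/4) := by
              apply mul_le_mul_of_nonneg_right hm2; positivity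
      have hm1 : a + 1/2 ≤ max (a + 1/2) (4/α) := le_max_left _ _
      nlinarith [mul_le_mul_of_nonneg_left he hmp.le]
    calc (a + x) * exp (-α * max (x - 2*a) 0 ^ 2)
        ≤ (a + x) * (exp (α * (2*a)^2) * exp (-(α/2) * x^2)) := by
          apply mul_le_mul_of_nonneg_left h2 (by linarith)
      _ ≤ (max (a + 1/2) (4/α) * exp ((α/4) * x^2)) * (exp (α * (2*a)^2) * exp (-(α/2) * x^2)) := by
          apply mul_le_mul_of_nonneg_right h3; positivity
      _ = K * exp (-(α/4) * x^2) := by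
          have hexp : exp ((α/4)*x^2) * (exp (α*(2*a)^2) * exp (-(α/2)*x^2))
              = exp (α*(2*a)^2) * exp (-(α/4)*x^2) := by
            rw [← Real.exp_add, ← Real.exp_add, ← Real.exp_add]; congr 1; ring
          rw [hK, mul_assoc, hexp, ← mul_assoc]

noncomputable def antipHomeo : S2 ≃ₜ S2 :=
  { toFun := antip, invFun := antip,
    left_inv := antip_invol.leftInverse, right_inv := antip_invol.rightInverse,
    continuous_toFun := continuous_antip, continuous_invFun := continuous_antip }

section Core
open Filter

lemma cont_dot1 (v : R3) : Continuous (fun p : R3 × S2 => dotp (p.1 - v) (p.2 : R3)) := by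
  unfold dotp
  exact Continuous.inner (continuous_fst.sub continuous_const)
    (continuous_subtype_val.comp continuous_snd)

lemma cont_dot2 (v : R3) : Continuous (fun p : R3 × S2 => dotp (v - p.1) (p.2 : R3)) := by
  unfold dotp
  exact Continuous.inner (continuous_const.sub continuous_fst)
    (continuous_subtype_val.comp continuous_snd)

lemma core_lemma (g : R3 → ℝ) (hgc : Continuous g) {C α : ℝ} (hα : 0 < α)
    (hg0 : ∀ x, 0 ≤ g x) (hgb : ∀ x, g x ≤ C * exp (-α * ‖x‖ ^ 2)) (v : R3) :
    ∫ p : R3 × S2, (g (v - dotp (p.1 - v) (p.2 : R3) • (p.2 : R3))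
          * g (p.1 - dotp (p.1 - v) (p.2 : R3) • (p.2 : R3))
        - g v * g p.1) * max (dotp (p.1 - v) (p.2 : R3)) 0
        ∂((volume : Measure R3).prod sphMeasure)
    = ∫ p : R3 × S2, (g (v - dotp (v - p.1) (p.2 : R3) • (p.2 : R3))
          * g (p.1 + dotp (v - p.1) (p.2 : R3) • (p.2 : R3))
        - g v * g p.1) * max (dotp (v - p.1) (p.2 : R3)) 0
        ∂((volume : Measure R3).prod sphMeasure) := by
  have hC : 0 ≤ C := by
    have h := (hg0 0).trans (hgb 0)
    simpa using h
  -- the dominating function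
  set M0 : R3 → ℝ := fun w => (C*C) * ((‖v‖ + ‖w‖) * exp (-α * max (‖w‖ - 2 * ‖v‖) 0 ^ 2))
    with hM0def
  have hM0 : Integrable M0 volume := (master_integrable hα v).const_mul _
  have hMP : Integrable (fun p : R3 × S2 => M0 p.1) ((volume : Measure R3).prod sphMeasure) := by
    have h1 := hM0.mul_prod (integrable_const (1:ℝ) (μ := sphMeasure))
    simpa using h1
  -- key pointwise bound
  have key : ∀ (x y w : R3) (kr : ℝ), 0 ≤ kr → kr ≤ ‖v‖ + ‖w‖ →
      max (‖w‖ - 2 * ‖v‖) 0 ^ 2 ≤ ‖x‖^2 + ‖y‖^2 →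
      g x * g y * kr ≤ M0 w := by
    intro x y w kr hk0 hk1 hsq
    have b1 : g x * g y ≤ (C * exp (-α * ‖x‖^2)) * (C * exp (-α * ‖y‖^2)) :=
      mul_le_mul (hgb x) (hgb y) (hg0 y) (le_trans (hg0 x) (hgb x))
    have b2 : (C * exp (-α * ‖x‖^2)) * (C * exp (-α * ‖y‖^2))
        = (C*C) * exp (-α * (‖x‖^2 + ‖y‖^2)) := by
      rw [mul_mul_mul_comm, ← Real.exp_add]
      congr 1
      ring
    have b3 : exp (-α * (‖x‖^2 + ‖y‖^2)) ≤ exp (-α * max (‖w‖ - 2*‖v‖) 0 ^2) := by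
      rw [Real.exp_le_exp]; nlinarith
    have hb : g x * g y ≤ (C*C) * exp (-α * max (‖w‖ - 2*‖v‖) 0 ^2) := by
      calc g x * g y ≤ _ := b1
        _ = _ := b2
        _ ≤ (C*C) * exp (-α * max (‖w‖ - 2*‖v‖) 0 ^2) :=
            mul_le_mul_of_nonneg_left b3 (by positivity)
    calc g x * g y * kr ≤ ((C*C) * exp (-α * max (‖w‖ - 2*‖v‖) 0 ^2)) * (‖v‖ + ‖w‖) :=
          mul_le_mul hb hk1 hk0 (by positivity)
      _ = M0 w := by rw [hM0def]; ring
  -- kernel bounds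
  have hker1 : ∀ p : R3 × S2, max (dotp (p.1 - v) (p.2:R3)) 0 ≤ ‖v‖ + ‖p.1‖ := by
    intro p
    have h1 : |dotp (p.1 - v) (p.2:R3)| ≤ ‖p.1 - v‖ := abs_dotp_le _ _
    have h2 : ‖p.1 - v‖ ≤ ‖p.1‖ + ‖v‖ := norm_sub_le _ _
    refine max_le ?_ (by positivity)
    calc dotp (p.1 - v) (p.2:R3) ≤ |dotp (p.1 - v) (p.2:R3)| := le_abs_self _
      _ ≤ ‖p.1‖ + ‖v‖ := h1.trans h2
      _ = ‖v‖ + ‖p.1‖ := by ring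
  have hker2 : ∀ p : R3 × S2, max (dotp (v - p.1) (p.2:R3)) 0 ≤ ‖v‖ + ‖p.1‖ := by
    intro p
    have h1 : |dotp (v - p.1) (p.2:R3)| ≤ ‖v - p.1‖ := abs_dotp_le _ _
    have h2 : ‖v - p.1‖ ≤ ‖v‖ + ‖p.1‖ := norm_sub_le _ _
    exact max_le ((le_abs_self _).trans (h1.trans h2)) (by positivity)
  -- squared-norm bound, loss/Boltzmann-gain version
  have hsq0 : ∀ w : R3, max (‖w‖ - 2 * ‖v‖) 0 ^ 2 ≤ ‖v‖^2 + ‖w‖^2 := by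
    intro w
    have h1 : max (‖w‖ - 2 * ‖v‖) 0 ≤ ‖w‖ :=
      max_le (by linarith [norm_nonneg v]) (norm_nonneg _)
    have h0 : (0:ℝ) ≤ max (‖w‖ - 2 * ‖v‖) 0 := le_max_right _ _
    nlinarith [sq_nonneg ‖v‖]
  -- squared-norm bound, hierarchy-gain version
  have hsqH : ∀ (w : R3) (n : S2), max (‖w‖ - 2 * ‖v‖) 0 ^ 2
      ≤ ‖v - dotp (w - v) (n:R3) • (n:R3)‖^2 + ‖w - dotp (w - v) (n:R3) • (n:R3)‖^2 := by
    intro w n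
    rw [energy_id' v w n]
    set N : ℝ := ‖w - (2 * dotp v (n:R3)) • (n:R3)‖ with hN
    have hc : ‖w - (w - (2 * dotp v (n:R3)) • (n:R3))‖ = |2 * dotp v (n:R3)| := by
      rw [sub_sub_cancel, norm_smul, norm_S2, mul_one, Real.norm_eq_abs]
    have h2 : ‖w‖ - N ≤ |2 * dotp v (n:R3)| := by
      rw [← hc]; exact norm_sub_norm_le _ _
    have h3 : |2 * dotp v (n:R3)| ≤ 2 * ‖v‖ := by
      rw [abs_mul, abs_two]
      have := abs_dotp_le v n
      linarith
    have h4 : max (‖w‖ - 2 * ‖v‖) 0 ≤ N := max_le (by linarith) (norm_nonneg _)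
    have h0 : (0:ℝ) ≤ max (‖w‖ - 2 * ‖v‖) 0 := le_max_right _ _
    nlinarith [sq_nonneg ‖v‖]
  -- continuity pieces
  have hcoe : Continuous (fun p : R3 × S2 => (p.2 : R3)) :=
    continuous_subtype_val.comp continuous_snd
  have hc1 := cont_dot1 v
  have hc2 := cont_dot2 v
  -- the four integrands and their integrability
  have int_gainH : Integrable (fun p : R3 × S2 =>
      g (v - dotp (p.1 - v) (p.2:R3) • (p.2:R3)) * g (p.1 - dotp (p.1 - v) (p.2:R3) • (p.2:R3))
        * max (dotp (p.1 - v) (p.2:R3)) 0) ((volume : Measure R3).prod sphMeasure) := by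
    refine Integrable.mono' hMP ?_ (Eventually.of_forall fun p => ?_)
    · exact Continuous.aestronglyMeasurable <| by
        exact ((hgc.comp (continuous_const.sub (hc1.smul hcoe))).mul
          (hgc.comp (continuous_fst.sub (hc1.smul hcoe)))).mul (hc1.max continuous_const)
    · have hnn : 0 ≤ g (v - dotp (p.1 - v) (p.2:R3) • (p.2:R3))
          * g (p.1 - dotp (p.1 - v) (p.2:R3) • (p.2:R3)) * max (dotp (p.1 - v) (p.2:R3)) 0 :=
        mul_nonneg (mul_nonneg (hg0 _) (hg0 _)) (le_max_right _ _)
      rw [Real.norm_of_nonneg hnn]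
      exact key _ _ p.1 _ (le_max_right _ _) (hker1 p) (hsqH p.1 p.2)
  have int_lossH : Integrable (fun p : R3 × S2 =>
      g v * g p.1 * max (dotp (p.1 - v) (p.2:R3)) 0) ((volume : Measure R3).prod sphMeasure) := by
    refine Integrable.mono' hMP ?_ (Eventually.of_forall fun p => ?_)
    · exact Continuous.aestronglyMeasurable <|
        ((continuous_const.mul (hgc.comp continuous_fst)).mul (hc1.max continuous_const))
    · have hnn : 0 ≤ g v * g p.1 * max (dotp (p.1 - v) (p.2:R3)) 0 :=
        mul_nonneg (mul_nonneg (hg0 _) (hg0 _)) (le_max_right _ _)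
      rw [Real.norm_of_nonneg hnn]
      exact key _ _ p.1 _ (le_max_right _ _) (hker1 p) (hsq0 p.1)
  have int_gainB : Integrable (fun p : R3 × S2 =>
      g (v - dotp (v - p.1) (p.2:R3) • (p.2:R3)) * g (p.1 + dotp (v - p.1) (p.2:R3) • (p.2:R3))
        * max (dotp (v - p.1) (p.2:R3)) 0) ((volume : Measure R3).prod sphMeasure) := by
    refine Integrable.mono' hMP ?_ (Eventually.of_forall fun p => ?_)
    · exact Continuous.aestronglyMeasurable <| by
        exact ((hgc.comp (continuous_const.sub (hc2.smul hcoe))).mul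
          (hgc.comp (continuous_fst.add (hc2.smul hcoe)))).mul (hc2.max continuous_const)
    · have hnn : 0 ≤ g (v - dotp (v - p.1) (p.2:R3) • (p.2:R3))
          * g (p.1 + dotp (v - p.1) (p.2:R3) • (p.2:R3)) * max (dotp (v - p.1) (p.2:R3)) 0 :=
        mul_nonneg (mul_nonneg (hg0 _) (hg0 _)) (le_max_right _ _)
      rw [Real.norm_of_nonneg hnn]
      refine key _ _ p.1 _ (le_max_right _ _) (hker2 p) ?_
      rw [energy_id v p.1 p.2]
      exact hsq0 p.1
  have int_lossB : Integrable (fun p : R3 × S2 =>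
      g v * g p.1 * max (dotp (v - p.1) (p.2:R3)) 0) ((volume : Measure R3).prod sphMeasure) := by
    refine Integrable.mono' hMP ?_ (Eventually.of_forall fun p => ?_)
    · exact Continuous.aestronglyMeasurable <|
        ((continuous_const.mul (hgc.comp continuous_fst)).mul (hc2.max continuous_const))
    · have hnn : 0 ≤ g v * g p.1 * max (dotp (v - p.1) (p.2:R3)) 0 :=
        mul_nonneg (mul_nonneg (hg0 _) (hg0 _)) (le_max_right _ _)
      rw [Real.norm_of_nonneg hnn]
      exact key _ _ p.1 _ (le_max_right _ _) (hker2 p) (hsq0 p.1)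
  -- gain terms agree (reflection in the velocity variable)
  have hgain : ∫ p : R3 × S2, g (v - dotp (p.1 - v) (p.2:R3) • (p.2:R3))
        * g (p.1 - dotp (p.1 - v) (p.2:R3) • (p.2:R3)) * max (dotp (p.1 - v) (p.2:R3)) 0
        ∂((volume : Measure R3).prod sphMeasure)
      = ∫ p : R3 × S2, g (v - dotp (v - p.1) (p.2:R3) • (p.2:R3))
        * g (p.1 + dotp (v - p.1) (p.2:R3) • (p.2:R3)) * max (dotp (v - p.1) (p.2:R3)) 0
        ∂((volume : Measure R3).prod sphMeasure) := by
    rw [integral_prod_symm _ int_gainH, integral_prod_symm _ int_gainB]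
    refine integral_congr_ae (Eventually.of_forall fun n => ?_)
    have hsub := integral_refl v n (fun w =>
      g (v - dotp (w - v) (n:R3) • (n:R3)) * g (w - dotp (w - v) (n:R3) • (n:R3))
        * max (dotp (w - v) (n:R3)) 0)
    beta_reduce
    rw [← hsub]
    refine integral_congr_ae (Eventually.of_forall fun w => ?_)
    beta_reduce
    have hneg : dotp (v - w) (n:R3) = -(dotp (w - v) (n:R3)) := by
      unfold dotp
      rw [show v - w = -(w - v) from (neg_sub w v).symm, inner_neg_left]
    have h1 : dotp ((w - (2 * dotp (w - v) (n:R3)) • (n:R3)) - v) (n:R3)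
        = dotp (v - w) (n:R3) := by
      rw [show (w - (2 * dotp (w - v) (n:R3)) • (n:R3)) - v
          = (w - v) - (2 * dotp (w - v) (n:R3)) • (n:R3) by abel]
      unfold dotp
      rw [inner_sub_left, real_inner_smul_left]
      have hnn : (inner ℝ (n:R3) (n:R3) : ℝ) = 1 := dotp_self_S2 n
      rw [hnn, show v - w = -(w - v) from (neg_sub w v).symm, inner_neg_left]
      ring
    rw [h1]
    have h3 : (w - (2 * dotp (w - v) (n:R3)) • (n:R3)) - dotp (v - w) (n:R3) • (n:R3)
        = w + dotp (v - w) (n:R3) • (n:R3) := by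
      rw [hneg]
      module
    rw [h3]
  -- loss terms agree (antipodal map on the sphere)
  have hloss : ∫ p : R3 × S2, g v * g p.1 * max (dotp (p.1 - v) (p.2:R3)) 0
        ∂((volume : Measure R3).prod sphMeasure)
      = ∫ p : R3 × S2, g v * g p.1 * max (dotp (v - p.1) (p.2:R3)) 0
        ∂((volume : Measure R3).prod sphMeasure) := by
    have mp0 : MeasurePreserving (fun p : R3 × S2 => (p.1, antip p.2))
        ((volume : Measure R3).prod sphMeasure) ((volume : Measure R3).prod sphMeasure) :=
      (MeasurePreserving.id (volume : Measure R3)).prod antip_measurePreserving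
    have emb : MeasurableEmbedding (fun p : R3 × S2 => (p.1, antip p.2)) :=
      ((MeasurableEquiv.refl R3).prodCongr antipHomeo.toMeasurableEquiv).measurableEmbedding
    have h := mp0.integral_comp emb
      (fun q : R3 × S2 => g v * g q.1 * max (dotp (q.1 - v) (q.2:R3)) 0)
    rw [← h]
    refine integral_congr_ae (Eventually.of_forall fun p => ?_)
    beta_reduce
    rw [antip_coe]
    congr 1
    unfold dotp
    rw [inner_neg_right, show v - p.1 = -(p.1 - v) from (neg_sub p.1 v).symm, inner_neg_left]
  simp only [sub_mul]
  rw [integral_sub int_gainH int_lossH, integral_sub int_gainB int_lossB, hgain, hloss]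

end Core

/-- Tensor powers of a solution of the Boltzmann equation solve the Boltzmann hierarchy:
`∂_t F_k + Σ_j v_j·∇_{x_j} F_k = γ Σ_j C^{j,k+1}(F_{k+1})` with `F_k = f^{⊗k}`. -/
theorem tensor_power_solves_boltzmann_hierarchy (γ T : ℝ) (hγ : 0 < γ) (hT : 0 < T)
    (f : ℝ → R3 → R3 → ℝ)
    (hf_cont : Continuous (fun q : ℝ × R3 × R3 => f q.1 q.2.1 q.2.2))
    (hf_smooth : ∀ v : R3, ContDiff ℝ 1 (fun p : ℝ × R3 => f p.1 p.2 v))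
    (hf_bound : ∃ C α : ℝ, 0 < C ∧ 0 < α ∧ ∀ t ∈ Set.Icc (0 : ℝ) T, ∀ (x v : R3),
      0 ≤ f t x v ∧ f t x v ≤ C * exp (-α * ‖v‖ ^ 2))
    (hf_eq : ∀ t ∈ Set.Icc (0 : ℝ) T, ∀ (x v : R3),
      fderiv ℝ (fun p : ℝ × R3 => f p.1 p.2 v) (t, x) (1, v) = Cb γ (f t x) v) :
    ∀ k : ℕ, 1 ≤ k → ∀ t ∈ Set.Icc (0 : ℝ) T, ∀ X V : Fin k → R3,
      fderiv ℝ (fun p : ℝ × (Fin k → R3) => ∏ j : Fin k, f p.1 (p.2 j) (V j)) (t, X) (1, V)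
        = γ * ∑ j : Fin k,
            Chier k j (fun Y W => ∏ i : Fin (k + 1), f t (Y i) (W i)) X V := by
  obtain ⟨C, α, hCpos, hα, hbound⟩ := hf_bound
  intro k hk t ht X V
  classical
  have hg : ∀ j : Fin k, Continuous (f t (X j)) := fun j =>
    hf_cont.comp (continuous_const.prodMk (continuous_const.prodMk continuous_id))
  have hcore : ∀ j : Fin k,
      (∫ p : R3 × S2, (f t (X j) (V j - dotp (p.1 - V j) (p.2:R3) • (p.2:R3))
            * f t (X j) (p.1 - dotp (p.1 - V j) (p.2:R3) • (p.2:R3))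
          - f t (X j) (V j) * f t (X j) p.1) * max (dotp (p.1 - V j) (p.2:R3)) 0 ∂prodMeas)
        = ∫ p, CbInt (f t (X j)) (V j) p ∂prodMeas := by
    intro j
    have h := core_lemma (f t (X j)) (hg j) hα
      (fun x => (hbound t ht (X j) x).1) (fun x => (hbound t ht (X j) x).2) (V j)
    simpa [prodMeas, CbInt, vPost, wPost, collKer] using h
  have hchier : ∀ j : Fin k,
      Chier k j (fun Y W => ∏ i : Fin (k + 1), f t (Y i) (W i)) X V
        = (∏ i ∈ Finset.univ.erase j, f t (X i) (V i))
            * ∫ p, CbInt (f t (X j)) (V j) p ∂prodMeas := by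
    intro j
    have heq : ∀ p : R3 × S2,
        ChierInt k j (fun Y W => ∏ i : Fin (k + 1), f t (Y i) (W i)) X V p
        = (∏ i ∈ Finset.univ.erase j, f t (X i) (V i))
            * ((f t (X j) (V j - dotp (p.1 - V j) (p.2:R3) • (p.2:R3))
            * f t (X j) (p.1 - dotp (p.1 - V j) (p.2:R3) • (p.2:R3))
          - f t (X j) (V j) * f t (X j) p.1) * max (dotp (p.1 - V j) (p.2:R3)) 0) := by
      intro p
      have hnej : j.castSucc ≠ Fin.last k := (Fin.castSucc_lt_last j).ne
      have hWUl : collUpdate k j p.2 (Fin.snoc V p.1) (Fin.last k)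
          = p.1 - dotp (p.1 - V j) (p.2:R3) • (p.2:R3) := by
        simp [collUpdate, Fin.snoc_last, Fin.snoc_castSucc]
      have hWUj : collUpdate k j p.2 (Fin.snoc V p.1) j.castSucc
          = V j - dotp (p.1 - V j) (p.2:R3) • (p.2:R3) := by
        simp [collUpdate, Function.update_apply, hnej, Fin.snoc_last, Fin.snoc_castSucc]
      have hWUi : ∀ i : Fin k, i ≠ j →
          collUpdate k j p.2 (Fin.snoc V p.1) i.castSucc = V i := by
        intro i hij
        have h1 : i.castSucc ≠ Fin.last k := (Fin.castSucc_lt_last i).ne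
        have h2 : i.castSucc ≠ j.castSucc := by simpa [Fin.castSucc_inj] using hij
        simp [collUpdate, Function.update_apply, h1, h2, Fin.snoc_castSucc]
      simp only [ChierInt]
      beta_reduce
      have hprod1 : (∏ i : Fin (k+1), f t ((Fin.snoc X (X j) : Fin (k+1) → R3) i)
            (collUpdate k j p.2 (Fin.snoc V p.1) i))
          = (f t (X j) (V j - dotp (p.1 - V j) (p.2:R3) • (p.2:R3))
              * ∏ i ∈ Finset.univ.erase j, f t (X i) (V i))
            * f t (X j) (p.1 - dotp (p.1 - V j) (p.2:R3) • (p.2:R3)) := by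
        rw [Fin.prod_univ_castSucc]
        congr 1
        · rw [← Finset.mul_prod_erase Finset.univ _ (Finset.mem_univ j)]
          congr 1
          · rw [Fin.snoc_castSucc, hWUj]
          · refine Finset.prod_congr rfl fun i hi => ?_
            rw [Fin.snoc_castSucc, hWUi i (Finset.ne_of_mem_erase hi)]
        · rw [Fin.snoc_last, hWUl]
      have hprod2 : (∏ i : Fin (k+1), f t ((Fin.snoc X (X j) : Fin (k+1) → R3) i)
            ((Fin.snoc V p.1 : Fin (k+1) → R3) i))
          = (f t (X j) (V j) * ∏ i ∈ Finset.univ.erase j, f t (X i) (V i))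
            * f t (X j) p.1 := by
        rw [Fin.prod_univ_castSucc]
        congr 1
        · rw [← Finset.mul_prod_erase Finset.univ _ (Finset.mem_univ j)]
          congr 1
          · rw [Fin.snoc_castSucc, Fin.snoc_castSucc]
          · exact Finset.prod_congr rfl fun i hi => by
              rw [Fin.snoc_castSucc, Fin.snoc_castSucc]
        · rw [Fin.snoc_last, Fin.snoc_last]
      rw [hprod1, hprod2]
      ring
    rw [Chier]
    simp only [heq]
    rw [MeasureTheory.integral_const_mul, hcore j]
  -- the derivative computation
  have hder : ∀ j : Fin k, HasFDerivAt (fun p : ℝ × (Fin k → R3) => f p.1 (p.2 j) (V j))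
      ((fderiv ℝ (fun q : ℝ × R3 => f q.1 q.2 (V j)) (t, X j)).comp
        ((ContinuousLinearMap.fst ℝ ℝ (Fin k → R3)).prod
          ((ContinuousLinearMap.proj j).comp (ContinuousLinearMap.snd ℝ ℝ (Fin k → R3)))))
      (t, X) := by
    intro j
    have h1 : HasFDerivAt (fun q : ℝ × R3 => f q.1 q.2 (V j))
        (fderiv ℝ (fun q : ℝ × R3 => f q.1 q.2 (V j)) (t, X j)) (t, X j) :=
      (((hf_smooth (V j)).differentiable one_ne_zero) (t, X j)).hasFDerivAt
    exact h1.comp (t, X)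
      (((ContinuousLinearMap.fst ℝ ℝ (Fin k → R3)).prod
        ((ContinuousLinearMap.proj j).comp
          (ContinuousLinearMap.snd ℝ ℝ (Fin k → R3)))).hasFDerivAt)
  have hprodD := HasFDerivAt.finset_prod (u := Finset.univ)
    (g := fun (j : Fin k) (p : ℝ × (Fin k → R3)) => f p.1 (p.2 j) (V j))
    (g' := fun j => (fderiv ℝ (fun q : ℝ × R3 => f q.1 q.2 (V j)) (t, X j)).comp
      ((ContinuousLinearMap.fst ℝ ℝ (Fin k → R3)).prod
        ((ContinuousLinearMap.proj j).comp (ContinuousLinearMap.snd ℝ ℝ (Fin k → R3)))))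
    (x := (t, X)) (fun j _ => hder j)
  rw [hprodD.fderiv]
  simp only [ContinuousLinearMap.sum_apply, ContinuousLinearMap.smul_apply,
    ContinuousLinearMap.coe_comp', Function.comp_apply, ContinuousLinearMap.prod_apply,
    ContinuousLinearMap.coe_fst', ContinuousLinearMap.coe_snd', ContinuousLinearMap.proj_apply,
    smul_eq_mul]
  have hfe : ∀ j : Fin k,
      fderiv ℝ (fun q : ℝ × R3 => f q.1 q.2 (V j)) (t, X j) (1, V j)
        = Cb γ (f t (X j)) (V j) := fun j => hf_eq t ht (X j) (V j)
  simp only [hfe, Cb, hchier]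
  rw [Finset.mul_sum]
  exact Finset.sum_congr rfl fun j _ => by ring
end
end
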